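/- Let $m \ge 2$ be a natural number, $\alpha_m = \frac{2m}{4m-3}$, $Re > 0$, and let $\Omega_1, \Omega_m, \Omega_{m+1} > 0$ satisfy $\Omega_m^{m^2} \le 2^{m^2} \Omega_1 \Omega_{m+1}^{m^2-1}$. Define $D_k = Re^{\alpha_k - 1/2} \Omega_k^{\alpha_k}$ for $k \in \{1, m, m+1\}$ (with $\alpha_1 = 2$). Then $\left(\frac{D_m}{D_1}\right) \le 2^{2m^2} \left(\frac{D_{m+1}}{D_m}\right)^{(4m+1)(m-1)}$. -/

import Mathlib

theorem Dm_triangular (m : ℕ) (hm : 2 ≤ m) (Re Ω₁ Ωm Ωm1 : ℝ)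
    (hRe : 0 < Re) (hΩ₁ : 0 < Ω₁) (hΩm : 0 < Ωm) (hΩm1 : 0 < Ωm1)
    (hΩ : Ωm ^ ((m : ℝ) ^ 2) ≤ 2 ^ ((m : ℝ) ^ 2) * Ω₁ * Ωm1 ^ ((m : ℝ) ^ 2 - 1))
    (D₁ Dm Dm1 : ℝ)
    (hD₁ : D₁ = Re ^ ((2 : ℝ) - 1 / 2) * Ω₁ ^ (2 : ℝ))
    (hDm : Dm = Re ^ ((2 * (m : ℝ)) / (4 * m - 3) - 1 / 2) *
      Ωm ^ ((2 * (m : ℝ)) / (4 * m - 3)))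
    (hDm1 : Dm1 = Re ^ ((2 * ((m : ℝ) + 1)) / (4 * (m + 1) - 3) - 1 / 2) *
      Ωm1 ^ ((2 * ((m : ℝ) + 1)) / (4 * (m + 1) - 3))) :
    Dm / D₁ ≤ 2 ^ (2 * (m : ℝ) ^ 2) *
      (Dm1 / Dm) ^ ((4 * (m : ℝ) + 1) * ((m : ℝ) - 1)) := by
  set M : ℝ := (m : ℝ) with hM
  have hM2 : (2:ℝ) ≤ M := by rw [hM]; exact_mod_cast hm
  have h43 : (0:ℝ) < 4 * M - 3 := by linarith
  have h41 : (0:ℝ) < 4 * M + 1 := by linarith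
  set α : ℝ := 2 * M / (4 * M - 3) with hα
  set β : ℝ := 2 * (M + 1) / (4 * (M + 1) - 3) with hβ
  set e : ℝ := (4 * M + 1) * (M - 1) with he
  -- exponent identities
  have h41' : 4 * (M + 1) - 3 = 4 * M + 1 := by ring
  have hA : (β - α) * e = α - 2 := by
    rw [hα, hβ, he, h41']; field_simp [h43.ne', h41.ne', show M * 4 - 3 ≠ 0 by linarith, show M * 4 + 1 ≠ 0 by linarith]; ring
  have hB : β * e = 2 * M ^ 2 - 2 := by
    rw [hβ, he, h41']; field_simp [h41.ne']; ring
  have hC : α * e = 2 * M ^ 2 - α := by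
    rw [hα, he]; field_simp [h43.ne', show M * 4 - 3 ≠ 0 by linarith]; ring
  -- squared hypothesis
  have key : Ωm ^ (2 * M ^ 2) ≤ 2 ^ (2 * M ^ 2) * Ω₁ ^ (2:ℝ) * Ωm1 ^ (2 * M ^ 2 - 2) := by
    have h1 : Ωm ^ (M ^ 2) * Ωm ^ (M ^ 2) = Ωm ^ (2 * M ^ 2) := by
      rw [← Real.rpow_add hΩm]; ring_nf
    have h2 : (2 ^ (M ^ 2) * Ω₁ * Ωm1 ^ (M ^ 2 - 1)) * (2 ^ (M ^ 2) * Ω₁ * Ωm1 ^ (M ^ 2 - 1))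
        = 2 ^ (2 * M ^ 2) * Ω₁ ^ (2:ℝ) * Ωm1 ^ (2 * M ^ 2 - 2) := by
      rw [Real.rpow_two]
      rw [show (2:ℝ) ^ (2 * M ^ 2) = 2 ^ (M ^ 2) * 2 ^ (M ^ 2) by
        rw [← Real.rpow_add two_pos]; ring_nf]
      rw [show Ωm1 ^ (2 * M ^ 2 - 2) = Ωm1 ^ (M ^ 2 - 1) * Ωm1 ^ (M ^ 2 - 1) by
        rw [← Real.rpow_add hΩm1]; ring_nf]
      ring
    calc Ωm ^ (2 * M ^ 2) = Ωm ^ (M ^ 2) * Ωm ^ (M ^ 2) := h1.symm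
      _ ≤ (2 ^ (M ^ 2) * Ω₁ * Ωm1 ^ (M ^ 2 - 1)) * (2 ^ (M ^ 2) * Ω₁ * Ωm1 ^ (M ^ 2 - 1)) :=
          mul_le_mul hΩ hΩ (Real.rpow_nonneg hΩm.le _) (by positivity)
      _ = _ := h2
  -- rewrite ratios
  have hL : Dm / D₁ = Re ^ (α - 2) * (Ωm ^ α / Ω₁ ^ (2:ℝ)) := by
    rw [hDm, hD₁]
    rw [show α - 1/2 = (α - 2) + ((2:ℝ) - 1/2) by ring, Real.rpow_add hRe]
    field_simp
  have hF : Dm1 / Dm = Re ^ (β - α) * (Ωm1 ^ β / Ωm ^ α) := by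
    rw [hDm, hDm1]
    rw [show β - 1/2 = (β - α) + (α - 1/2) by ring, Real.rpow_add hRe]
    have : (0:ℝ) < Re ^ (α - 1/2) := Real.rpow_pos_of_pos hRe _
    field_simp
  have hR : (Dm1 / Dm) ^ e = Re ^ (α - 2) * (Ωm1 ^ (2 * M ^ 2 - 2) / Ωm ^ (2 * M ^ 2 - α)) := by
    rw [hF, Real.mul_rpow (Real.rpow_nonneg hRe.le _) (by positivity),
      Real.div_rpow (Real.rpow_nonneg hΩm1.le _) (Real.rpow_nonneg hΩm.le _),
      ← Real.rpow_mul hRe.le, ← Real.rpow_mul hΩm1.le, ← Real.rpow_mul hΩm.le,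
      hA, hB, hC]
  rw [hL, hR, show (2:ℝ) ^ (2 * M ^ 2) * (Re ^ (α - 2) * (Ωm1 ^ (2 * M ^ 2 - 2) / Ωm ^ (2 * M ^ 2 - α)))
      = Re ^ (α - 2) * (2 ^ (2 * M ^ 2) * Ωm1 ^ (2 * M ^ 2 - 2) / Ωm ^ (2 * M ^ 2 - α)) by ring]
  apply mul_le_mul_of_nonneg_left _ (Real.rpow_nonneg hRe.le _)
  rw [div_le_div_iff₀ (by positivity) (Real.rpow_pos_of_pos hΩm _)]
  have hmm : Ωm ^ α * Ωm ^ (2 * M ^ 2 - α) = Ωm ^ (2 * M ^ 2) := by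
    rw [← Real.rpow_add hΩm]; ring_nf
  rw [hmm]
  exact key.trans_eq (by ring)
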